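/- A point m ∈ Λ(v,w) is 𝟏-semistable if and only if m satisfies the subspace condition: for any linear subspaces S_j ⊆ V_j (j = 1,…,n) such that Im Γ_j ⊆ S_j for all j, A_i(S_i) ⊆ S_{i+1} for all i, and B_i(S_{i+1}) ⊆ S_i for all i, one has S_j = V_j for all j. -/

import Mathlib

/-- The double quiver representation space `M(v,w)` for the type-A framed quiver, with
vertices indexed by `ℕ` (faithfully modelling vertices `1, …, n` by requiring the
dimension vectors to vanish at `0` and beyond `n`).  A point consists of the matrices of
the maps `A_i : V_i → V_{i+1}`, `B_i : V_{i+1} → V_i`, `Γ_j : W_j → V_j`,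
`Δ_j : V_j → W_j`. -/
abbrev Mvw (v w : ℕ → ℕ) : Type :=
  ((i : ℕ) → Matrix (Fin (v (i + 1))) (Fin (v i)) ℂ) ×
  ((i : ℕ) → Matrix (Fin (v i)) (Fin (v (i + 1))) ℂ) ×
  ((j : ℕ) → Matrix (Fin (v j)) (Fin (w j)) ℂ) ×
  ((j : ℕ) → Matrix (Fin (w j)) (Fin (v j)) ℂ)

/-- The group `G_v = ∏_i GL(V_i)`, with `GL(V_i)` realized as the units of the matrix
ring. -/
abbrev Gv (v : ℕ → ℕ) : Type := (i : ℕ) → (Matrix (Fin (v i)) (Fin (v i)) ℂ)ˣ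

/-- The action of `G_v` on `M(v,w)`:
`(g_i) · (A_i, B_i, Γ_j, Δ_j) = (g_{i+1} A_i g_i⁻¹, g_i B_i g_{i+1}⁻¹, g_j Γ_j, Δ_j g_j⁻¹)`. -/
noncomputable def actGv {v w : ℕ → ℕ} (g : Gv v) (m : Mvw v w) : Mvw v w :=
  (fun i => (g (i + 1)).val * m.1 i * (g i)⁻¹.val,
   fun i => (g i).val * m.2.1 i * (g (i + 1))⁻¹.val,
   fun j => (g j).val * m.2.2.1 j,
   fun j => m.2.2.2 j * (g j)⁻¹.val)

/-- `moment m i` is the component of the moment map `μ` at the vertex `i+1`: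
`Γ_{i+1} Δ_{i+1} + A_i B_i − B_{i+1} A_{i+1}` (an endomorphism of `V_{i+1}`). -/
noncomputable def moment {v w : ℕ → ℕ} (m : Mvw v w) (i : ℕ) :
    Matrix (Fin (v (i + 1))) (Fin (v (i + 1))) ℂ :=
  m.2.2.1 (i + 1) * m.2.2.2 (i + 1) + m.1 i * m.2.1 i - m.2.1 (i + 1) * m.1 (i + 1)

/-- A point is in `Λ(v,w) = μ⁻¹(0)` iff all components of the moment map vanish. -/
def inLambda {v w : ℕ → ℕ} (m : Mvw v w) : Prop := ∀ i, moment m i = 0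

/-- The subspace condition: any family of subspaces `S_j ⊆ V_j` containing the images of
the `Γ_j` and stable under the `A_i` and `B_i` must be the whole family `(V_j)`. -/
def SubCond {v w : ℕ → ℕ} (m : Mvw v w) : Prop :=
  ∀ S : (j : ℕ) → Submodule ℂ (Fin (v j) → ℂ),
    (∀ j, LinearMap.range (m.2.2.1 j).mulVecLin ≤ S j) →
    (∀ i, Submodule.map (m.1 i).mulVecLin (S i) ≤ S (i + 1)) →
    (∀ i, Submodule.map (m.2.1 i).mulVecLin (S (i + 1)) ≤ S i) →
    ∀ j, S j = ⊤

/-- Index type for the matrix-entry coordinates on `M(v,w)`. -/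
def CoordIdx (v w : ℕ → ℕ) : Type :=
  ((i : ℕ) × (Fin (v (i + 1)) × Fin (v i))) ⊕
  (((i : ℕ) × (Fin (v i) × Fin (v (i + 1)))) ⊕
  (((j : ℕ) × (Fin (v j) × Fin (w j))) ⊕
  ((j : ℕ) × (Fin (w j) × Fin (v j)))))

/-- The coordinates (matrix entries) of a point of `M(v,w)`. -/
def coords {v w : ℕ → ℕ} (m : Mvw v w) : CoordIdx v w → ℂ
  | Sum.inl ⟨i, p⟩ => m.1 i p.1 p.2
  | Sum.inr (Sum.inl ⟨i, p⟩) => m.2.1 i p.1 p.2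
  | Sum.inr (Sum.inr (Sum.inl ⟨j, p⟩)) => m.2.2.1 j p.1 p.2
  | Sum.inr (Sum.inr (Sum.inr ⟨j, p⟩)) => m.2.2.2 j p.1 p.2

/-- `𝟏`-semistability of a point of `Λ(v,w)`: there is a polynomial function `F` on
`M(v,w)` (a polynomial in the matrix entries) and `k ≥ 1` such that
`F(g·m') = (∏_i det g_i)^k · F(m')` for all `g ∈ G_v` and all `m' ∈ Λ(v,w)`, and
`F(m) ≠ 0`.  (The product of determinants over `i ≤ n` is the character `𝟏 = (1,…,1)`;
the factor at `i = 0` is trivial since `v 0 = 0`.) -/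
noncomputable def OneSemistable (n : ℕ) {v w : ℕ → ℕ} (m : Mvw v w) : Prop :=
  ∃ k : ℕ, 1 ≤ k ∧ ∃ P : MvPolynomial (CoordIdx v w) ℂ,
    (∀ g : Gv v, ∀ m' : Mvw v w, inLambda m' →
      MvPolynomial.eval (coords (actGv g m')) P =
        (∏ i ∈ Finset.range (n + 1), ((g i).val).det) ^ k *
          MvPolynomial.eval (coords m') P) ∧
    MvPolynomial.eval (coords m) P ≠ 0

namespace Stmt5

open Matrix

variable {v w : ℕ → ℕ}

/-- Paths in the double framed quiver ending at vertex `j`, starting from a framing column. -/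
inductive PathTo (v w : ℕ → ℕ) : ℕ → Type
  | gam (j : ℕ) (c : Fin (w j)) : PathTo v w j
  | stepA (i : ℕ) : PathTo v w i → PathTo v w (i + 1)
  | stepB (i : ℕ) : PathTo v w (i + 1) → PathTo v w i

/-- The vector obtained by evaluating a path at a point `m`. -/
noncomputable def pvec (m : Mvw v w) : ∀ {j : ℕ}, PathTo v w j → (Fin (v j) → ℂ)
  | _, .gam j c => (m.2.2.1 j).mulVec (Pi.single c 1)
  | _, .stepA i p => (m.1 i).mulVec (pvec m p)
  | _, .stepB i p => (m.2.1 i).mulVec (pvec m p)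

lemma pvec_mem (m : Mvw v w) (S : ∀ j, Submodule ℂ (Fin (v j) → ℂ))
    (hΓ : ∀ j, LinearMap.range (m.2.2.1 j).mulVecLin ≤ S j)
    (hA : ∀ i, Submodule.map (m.1 i).mulVecLin (S i) ≤ S (i + 1))
    (hB : ∀ i, Submodule.map (m.2.1 i).mulVecLin (S (i + 1)) ≤ S i) :
    ∀ {j} (p : PathTo v w j), pvec m p ∈ S j := by
  intro j p
  induction p with
  | gam j c => exact hΓ j ⟨Pi.single c 1, by simp [pvec]⟩
  | stepA i p ih => exact hA i ⟨pvec m p, ih, by simp [pvec]⟩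
  | stepB i p ih => exact hB i ⟨pvec m p, ih, by simp [pvec]⟩

lemma span_pvec_eq_top_of_subCond {m : Mvw v w} (h : SubCond m) (j : ℕ) :
    Submodule.span ℂ (Set.range fun p : PathTo v w j => pvec m p) = ⊤ := by
  apply h (fun j => Submodule.span ℂ (Set.range fun p : PathTo v w j => pvec m p))
  · intro j
    rw [Matrix.range_mulVecLin]
    apply Submodule.span_mono
    rintro x ⟨c, rfl⟩
    exact ⟨PathTo.gam j c, by simp [pvec, Matrix.mulVec_single_one]⟩
  · intro i
    rw [Submodule.map_span]
    apply Submodule.span_le.2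
    rintro x ⟨y, ⟨p, rfl⟩, rfl⟩
    exact Submodule.subset_span ⟨PathTo.stepA i p, by simp [pvec]⟩
  · intro i
    rw [Submodule.map_span]
    apply Submodule.span_le.2
    rintro x ⟨y, ⟨p, rfl⟩, rfl⟩
    exact Submodule.subset_span ⟨PathTo.stepB i p, by simp [pvec]⟩

end Stmt5
namespace Stmt5

open Matrix MvPolynomial

variable {v w : ℕ → ℕ}

/-- Generic matrices with polynomial-variable entries. -/
noncomputable def genA (v w : ℕ → ℕ) (i : ℕ) :
    Matrix (Fin (v (i + 1))) (Fin (v i)) (MvPolynomial (CoordIdx v w) ℂ) :=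
  Matrix.of fun r c => MvPolynomial.X (Sum.inl ⟨i, (r, c)⟩)

noncomputable def genB (v w : ℕ → ℕ) (i : ℕ) :
    Matrix (Fin (v i)) (Fin (v (i + 1))) (MvPolynomial (CoordIdx v w) ℂ) :=
  Matrix.of fun r c => MvPolynomial.X (Sum.inr (Sum.inl ⟨i, (r, c)⟩))

noncomputable def genΓ (v w : ℕ → ℕ) (j : ℕ) :
    Matrix (Fin (v j)) (Fin (w j)) (MvPolynomial (CoordIdx v w) ℂ) :=
  Matrix.of fun r c => MvPolynomial.X (Sum.inr (Sum.inr (Sum.inl ⟨j, (r, c)⟩)))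

/-- Polynomial version of `pvec` over the generic point. -/
noncomputable def pvecPoly : ∀ {j : ℕ}, PathTo v w j → (Fin (v j) → MvPolynomial (CoordIdx v w) ℂ)
  | _, .gam j c => (genΓ v w j).mulVec (Pi.single c 1)
  | _, .stepA i p => (genA v w i).mulVec (pvecPoly p)
  | _, .stepB i p => (genB v w i).mulVec (pvecPoly p)

lemma eval_mulVec {ι κ : Type} [Fintype κ] (f : MvPolynomial (CoordIdx v w) ℂ →+* ℂ)
    (M : Matrix ι κ (MvPolynomial (CoordIdx v w) ℂ)) (x : κ → MvPolynomial (CoordIdx v w) ℂ)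
    (r : ι) : f ((M.mulVec x) r) = ((M.map f).mulVec fun c => f (x c)) r := by
  simp [Matrix.mulVec, dotProduct, map_sum, _root_.map_mul]

lemma eval_pvecPoly (m' : Mvw v w) {j : ℕ} (p : PathTo v w j) (r : Fin (v j)) :
    MvPolynomial.eval (coords m') (pvecPoly p r) = pvec m' p r := by
  induction p with
  | gam j c =>
      show MvPolynomial.eval (coords m') (((genΓ v w j).mulVec (Pi.single c 1)) r) = _
      simp only [Matrix.mulVec_single_one]
      show MvPolynomial.eval (coords m') (MvPolynomial.X _) = ((m'.2.2.1 j).mulVec (Pi.single c 1)) r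
      simp only [MvPolynomial.eval_X, Matrix.mulVec_single_one]
      exact (MvPolynomial.eval_X (f := coords m') _).trans rfl
  | stepA i p ih =>
      show MvPolynomial.eval (coords m') (((genA v w i).mulVec (pvecPoly p)) r) = _
      rw [eval_mulVec (MvPolynomial.eval (coords m'))]
      show (((genA v w i).map _).mulVec fun c => MvPolynomial.eval (coords m') (pvecPoly p c)) r
        = ((m'.1 i).mulVec (pvec m' p)) r
      congr 1
      · ext a b; simp [genA]; exact (MvPolynomial.eval_X (f := coords m') _).trans rfl
      · funext c; exact ih c
  | stepB i p ih =>
      show MvPolynomial.eval (coords m') (((genB v w i).mulVec (pvecPoly p)) r) = _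
      rw [eval_mulVec (MvPolynomial.eval (coords m'))]
      show (((genB v w i).map _).mulVec fun c => MvPolynomial.eval (coords m') (pvecPoly p c)) r
        = ((m'.2.1 i).mulVec (pvec m' p)) r
      congr 1
      · ext a b; simp [genB]; exact (MvPolynomial.eval_X (f := coords m') _).trans rfl
      · funext c; exact ih c

lemma pvec_act (g : Gv v) (m' : Mvw v w) {j : ℕ} (p : PathTo v w j) :
    pvec (actGv g m') p = (g j).val.mulVec (pvec m' p) := by
  induction p with
  | gam j c =>
      show ((g j).val * m'.2.2.1 j).mulVec (Pi.single c 1) = _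
      rw [← Matrix.mulVec_mulVec]
      rfl
  | stepA i p ih =>
      show ((g (i + 1)).val * m'.1 i * ((g i)⁻¹).val).mulVec (pvec (actGv g m') p) = _
      rw [ih, Matrix.mulVec_mulVec, Matrix.mul_assoc, Matrix.mul_assoc,
        Units.inv_mul, Matrix.mul_one, ← Matrix.mulVec_mulVec]
      rfl
  | stepB i p ih =>
      show ((g i).val * m'.2.1 i * ((g (i + 1))⁻¹).val).mulVec (pvec (actGv g m') p) = _
      rw [ih, Matrix.mulVec_mulVec, Matrix.mul_assoc, Matrix.mul_assoc,
        Units.inv_mul, Matrix.mul_one, ← Matrix.mulVec_mulVec]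
      rfl

lemma coords_act1 (g : Gv v) (m' : Mvw v w) (i : ℕ) (rc : Fin (v (i + 1)) × Fin (v i)) :
    coords (actGv g m') (Sum.inl ⟨i, rc⟩)
      = ((g (i + 1)).val * m'.1 i * ((g i)⁻¹).val) rc.1 rc.2 := rfl

lemma coords_act2 (g : Gv v) (m' : Mvw v w) (i : ℕ) (rc : Fin (v i) × Fin (v (i + 1))) :
    coords (actGv g m') (Sum.inr (Sum.inl ⟨i, rc⟩))
      = ((g i).val * m'.2.1 i * ((g (i + 1))⁻¹).val) rc.1 rc.2 := rfl

lemma coords_act3 (g : Gv v) (m' : Mvw v w) (j : ℕ) (rc : Fin (v j) × Fin (w j)) :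
    coords (actGv g m') (Sum.inr (Sum.inr (Sum.inl ⟨j, rc⟩)))
      = ((g j).val * m'.2.2.1 j) rc.1 rc.2 := rfl

lemma coords_act4 (g : Gv v) (m' : Mvw v w) (j : ℕ) (rc : Fin (w j) × Fin (v j)) :
    coords (actGv g m') (Sum.inr (Sum.inr (Sum.inr ⟨j, rc⟩)))
      = (m'.2.2.2 j * ((g j)⁻¹).val) rc.1 rc.2 := rfl

end Stmt5
namespace Stmt5

open Matrix MvPolynomial

variable {v w : ℕ → ℕ}

lemma exists_basis_paths {m : Mvw v w} (h : SubCond m) (j : ℕ) :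
    ∃ b : Fin (v j) → PathTo v w j,
      (Matrix.of fun r c => pvec m (b c) r).det ≠ 0 := by
  have hspan := span_pvec_eq_top_of_subCond h j
  obtain ⟨s, hsub, hs, hli⟩ :=
    exists_linearIndependent ℂ (Set.range fun p : PathTo v w j => pvec m p)
  rw [hspan] at hs
  let B0 : Module.Basis s ℂ (Fin (v j) → ℂ) :=
    Module.Basis.mk hli (by rw [Subtype.range_coe, hs])
  let e : s ≃ Fin (v j) := B0.indexEquiv (Pi.basisFun ℂ (Fin (v j)))
  let B := B0.reindex e
  have hbex : ∀ c : Fin (v j), ∃ p : PathTo v w j, pvec m p = (e.symm c : Fin (v j) → ℂ) :=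
    fun c => hsub (e.symm c).2
  choose b hb using hbex
  refine ⟨b, ?_⟩
  have hMeq : (Matrix.of fun r c => pvec m (b c) r) = (Pi.basisFun ℂ (Fin (v j))).toMatrix ⇑B := by
    ext r c
    rw [Module.Basis.toMatrix_apply, Pi.basisFun_repr]
    show pvec m (b c) r = B c r
    rw [show (B c : Fin (v j) → ℂ) = pvec m (b c) from by
      simp only [B, B0, Module.Basis.reindex_apply, Module.Basis.mk_apply, hb c]]
  rw [hMeq]
  have := (Pi.basisFun ℂ (Fin (v j))).invertibleToMatrix B
  exact IsUnit.ne_zero ((Matrix.isUnit_iff_isUnit_det _).mp (isUnit_of_invertible _))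

lemma oneSemistable_of_subCond (n : ℕ) {m : Mvw v w} (h : SubCond m) : OneSemistable n m := by
  choose b hb using fun j => exists_basis_paths h j
  refine ⟨1, le_refl 1,
    ∏ j ∈ Finset.range (n + 1), (Matrix.of fun r c => pvecPoly (b j c) r).det, ?_, ?_⟩
  · have evalP : ∀ m'' : Mvw v w,
        MvPolynomial.eval (coords m'')
            (∏ j ∈ Finset.range (n + 1), (Matrix.of fun r c => pvecPoly (b j c) r).det)
          = ∏ j ∈ Finset.range (n + 1), (Matrix.of fun r c => pvec m'' (b j c) r).det := by
      intro m''
      rw [map_prod]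
      refine Finset.prod_congr rfl fun j _ => ?_
      rw [RingHom.map_det]
      congr 1
      ext r c
      simp only [Matrix.map_apply, Matrix.of_apply]
      exact eval_pvecPoly m'' (b j c) r
    intro g m' _
    rw [evalP, evalP, pow_one, ← Finset.prod_mul_distrib]
    refine Finset.prod_congr rfl fun j _ => ?_
    have : (Matrix.of fun r c => pvec (actGv g m') (b j c) r)
        = (g j).val * (Matrix.of fun r c => pvec m' (b j c) r) := by
      ext r c
      rw [Matrix.of_apply, pvec_act g m' (b j c)]
      simp [Matrix.mulVec, dotProduct, Matrix.mul_apply]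
    rw [this, Matrix.det_mul]
  · have evalP : MvPolynomial.eval (coords m)
        (∏ j ∈ Finset.range (n + 1), (Matrix.of fun r c => pvecPoly (b j c) r).det)
        = ∏ j ∈ Finset.range (n + 1), (Matrix.of fun r c => pvec m (b j c) r).det := by
      rw [map_prod]
      refine Finset.prod_congr rfl fun j _ => ?_
      rw [RingHom.map_det]
      congr 1
      ext r c
      simp only [Matrix.map_apply, Matrix.of_apply]
      exact eval_pvecPoly m (b j c) r
    rw [evalP]
    exact Finset.prod_ne_zero_iff.mpr fun j _ => hb j

end Stmt5
namespace Stmt5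

open Matrix MvPolynomial

variable {v w : ℕ → ℕ}

lemma matext {a b : ℕ} (M N : Matrix (Fin a) (Fin b) ℂ)
    (h : ∀ x, M.mulVec x = N.mulVec x) : M = N := by
  ext r c
  have := congrFun (h (Pi.single c 1)) r
  simpa using this


lemma twistA {a b : ℕ} (P' Q' : Matrix (Fin a) (Fin a) ℂ) (A : Matrix (Fin a) (Fin b) ℂ)
    (P Q : Matrix (Fin b) (Fin b) ℂ) (s : ℂ) (hs : s ≠ 0)
    (hQA : Q' * A * P = 0) :
    (P' + s⁻¹ • Q') * A * (P + s • Q) = (P' * A * P + Q' * A * Q) + s • (P' * A * Q) := by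
  have e1 : (P' + s⁻¹ • Q') * A = P' * A + s⁻¹ • (Q' * A) := by
    rw [Matrix.add_mul, Matrix.smul_mul]
  rw [e1, Matrix.add_mul, Matrix.mul_add, Matrix.mul_add]
  rw [Matrix.mul_smul, Matrix.smul_mul, Matrix.smul_mul, Matrix.mul_smul, smul_smul,
    hQA, smul_zero, inv_mul_cancel₀ hs, one_smul, zero_add]
  abel

lemma twistGamma {a b : ℕ} (P Q : Matrix (Fin a) (Fin a) ℂ) (G : Matrix (Fin a) (Fin b) ℂ)
    (s : ℂ) (hQG : Q * G = 0) (hPG : P * G = G) :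
    (P + s⁻¹ • Q) * G = G := by
  rw [Matrix.add_mul, Matrix.smul_mul, hQG, smul_zero, add_zero, hPG]

lemma twistDelta {a b : ℕ} (D : Matrix (Fin a) (Fin b) ℂ) (P Q : Matrix (Fin b) (Fin b) ℂ)
    (s : ℂ) : D * (P + s • Q) = D * P + s • (D * Q) := by
  rw [Matrix.mul_add, Matrix.mul_smul]

lemma unitPQ {a : ℕ} (P Q : Matrix (Fin a) (Fin a) ℂ) (hPP : P * P = P) (hPQ : P * Q = 0)
    (hQP : Q * P = 0) (hQQ : Q * Q = Q) (hsum : P + Q = 1) (s : ℂ) (hs : s ≠ 0) :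
    (P + s⁻¹ • Q) * (P + s • Q) = 1 := by
  rw [mul_add, add_mul, add_mul, hPP, Matrix.smul_mul, hQP, smul_zero,
    Matrix.mul_smul, hPQ, smul_zero, Matrix.smul_mul, Matrix.mul_smul, smul_smul,
    inv_mul_cancel₀ hs, one_smul, hQQ, add_zero, zero_add, hsum]

lemma det_proj_smul {d : ℕ} (S C : Submodule ℂ (Fin d → ℂ)) (h : IsCompl S C) (a : ℂ)
    (pm : Matrix (Fin d) (Fin d) ℂ)
    (hpm : pm = LinearMap.toMatrix' (S.subtype ∘ₗ S.linearProjOfIsCompl C h)) :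
    (pm + a • (1 - pm)).det = a ^ Module.finrank ℂ C := by
  classical
  set pl : (Fin d → ℂ) →ₗ[ℂ] (Fin d → ℂ) := S.subtype ∘ₗ S.linearProjOfIsCompl C h with hpldef
  set idm : (Fin d → ℂ) →ₗ[ℂ] (Fin d → ℂ) := LinearMap.id with hidm
  have h1 : pm + a • (1 - pm) = LinearMap.toMatrix' (pl + a • (idm - pl)) := by
    rw [map_add, _root_.map_smul, map_sub, hidm, LinearMap.toMatrix'_id, hpm]
  rw [h1, LinearMap.det_toMatrix']
  set b1 := Module.finBasis ℂ S with hb1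
  set b2 := Module.finBasis ℂ C with hb2
  set bb := (b1.prod b2).map (Submodule.prodEquivOfIsCompl _ _ h) with hbb
  rw [← LinearMap.det_toMatrix bb]
  have hbbl : ∀ i, bb (Sum.inl i) = (b1 i : Fin d → ℂ) := by
    intro i
    rw [hbb, Module.Basis.map_apply, Submodule.coe_prodEquivOfIsCompl']
    rw [Module.Basis.prod_apply_inl_fst, Module.Basis.prod_apply_inl_snd]
    simp
  have hbbr : ∀ i, bb (Sum.inr i) = (b2 i : Fin d → ℂ) := by
    intro i
    rw [hbb, Module.Basis.map_apply, Submodule.coe_prodEquivOfIsCompl']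
    rw [Module.Basis.prod_apply_inr_fst, Module.Basis.prod_apply_inr_snd]
    simp
  have hplS : ∀ x ∈ S, pl x = x := by
    intro x hx
    have h1 : S.linearProjOfIsCompl C h x = ⟨x, hx⟩ := by
      exact Submodule.projectionOnto_apply_left h (⟨x, hx⟩ : S)
    simp [hpldef, h1]
  have hplC : ∀ x ∈ C, pl x = 0 := by
    intro x hx
    have h2 : S.linearProjOfIsCompl C h x = 0 := Submodule.projectionOnto_apply_of_mem_right h hx
    simp [hpldef, h2]
  have hmat : LinearMap.toMatrix bb bb (pl + a • (idm - pl))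
      = Matrix.diagonal (Sum.elim (fun _ => (1 : ℂ)) fun _ => a) := by
    ext i i'
    rw [LinearMap.toMatrix_apply]
    cases i' with
    | inl i' =>
        have hfix : (pl + a • (idm - pl)) (bb (Sum.inl i')) = bb (Sum.inl i') := by
          have hx : pl (bb (Sum.inl i')) = bb (Sum.inl i') := by
            rw [hbbl]; exact hplS _ (b1 i').2
          simp [hidm, hx]
        rw [hfix, Module.Basis.repr_self]
        rcases eq_or_ne i (Sum.inl i') with hh | hh
        · subst hh; simp
        · simp [Finsupp.single_apply, Matrix.diagonal_apply, Ne.symm hh, hh]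
    | inr i' =>
        have hfix : (pl + a • (idm - pl)) (bb (Sum.inr i')) = a • bb (Sum.inr i') := by
          have hx : pl (bb (Sum.inr i')) = 0 := by
            rw [hbbr]; exact hplC _ (b2 i').2
          simp [hidm, hx]
        rw [hfix, _root_.map_smul, Module.Basis.repr_self]
        rcases eq_or_ne i (Sum.inr i') with hh | hh
        · subst hh; simp
        · simp [Finsupp.single_apply, Matrix.diagonal_apply, Ne.symm hh, hh]
  rw [hmat, Matrix.det_diagonal, Fintype.prod_sum_type]
  simp

set_option maxHeartbeats 2000000 in
lemma subCond_of_oneSemistable (n : ℕ) (hvn : ∀ i, n < i → v i = 0)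
    {m : Mvw v w} (hm : inLambda m) (hss : OneSemistable n m) : SubCond m := by
  intro S hSΓ hSA hSB
  by_contra hne
  push_neg at hne
  obtain ⟨j0, hj0⟩ := hne
  obtain ⟨k, hk, P, hPeq, hPne⟩ := hss
  classical
  -- complements and projections
  choose Cc hC using fun j => (S j).exists_isCompl
  set pl : ∀ j, (Fin (v j) → ℂ) →ₗ[ℂ] (Fin (v j) → ℂ) :=
    fun j => (S j).subtype ∘ₗ (S j).linearProjOfIsCompl (Cc j) (hC j) with hpl
  have hplS : ∀ j x, x ∈ S j → pl j x = x := by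
    intro j x hx
    have h1 : (S j).linearProjOfIsCompl (Cc j) (hC j) x = ⟨x, hx⟩ := by
      exact Submodule.projectionOnto_apply_left (hC j) (⟨x, hx⟩ : S j)
    simp [hpl, h1]
  have hplC : ∀ j x, x ∈ Cc j → pl j x = 0 := by
    intro j x hx
    have h2 : (S j).linearProjOfIsCompl (Cc j) (hC j) x = 0 :=
      Submodule.projectionOnto_apply_of_mem_right (hC j) hx
    simp [hpl, h2]
  have hplmem : ∀ j x, pl j x ∈ S j := by
    intro j x
    simp only [hpl, LinearMap.coe_comp, Function.comp_apply, Submodule.coe_subtype]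
    exact ((S j).linearProjOfIsCompl (Cc j) (hC j) x).2
  -- matrices
  set Pm : ∀ j, Matrix (Fin (v j)) (Fin (v j)) ℂ := fun j => LinearMap.toMatrix' (pl j) with hPmdef
  set Qm : ∀ j, Matrix (Fin (v j)) (Fin (v j)) ℂ := fun j => 1 - Pm j with hQmdef
  have hPmul : ∀ j x, (Pm j).mulVec x = pl j x := by
    intro j x
    rw [hPmdef, ← Matrix.toLin'_apply, Matrix.toLin'_toMatrix']
  have hQmul : ∀ j x, (Qm j).mulVec x = x - pl j x := by
    intro j x
    rw [hQmdef, Matrix.sub_mulVec, Matrix.one_mulVec, hPmul]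
  -- identities
  have hQ1 : ∀ j, Qm j = 1 - Pm j := fun _ => rfl
  have hPP : ∀ j, Pm j * Pm j = Pm j := by
    intro j
    apply matext
    intro x
    rw [← Matrix.mulVec_mulVec]
    simp only [hPmul]
    exact hplS j _ (hplmem j x)
  have hPQ : ∀ j, Pm j * Qm j = 0 := by
    intro j
    rw [hQ1, mul_sub, mul_one, hPP, sub_self]
  have hQP : ∀ j, Qm j * Pm j = 0 := by
    intro j
    rw [hQ1, sub_mul, one_mul, hPP, sub_self]
  have hQQ : ∀ j, Qm j * Qm j = Qm j := by
    intro j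
    rw [hQ1, sub_mul, one_mul, mul_sub, mul_one, hPP, sub_self, sub_zero]
  have hQA : ∀ i, Qm (i + 1) * m.1 i * Pm i = 0 := by
    intro i
    apply matext
    intro x
    rw [Matrix.mul_assoc, ← Matrix.mulVec_mulVec, ← Matrix.mulVec_mulVec, hPmul, hQmul]
    have hmem : (m.1 i).mulVec (pl i x) ∈ S (i + 1) := by
      refine hSA i ⟨pl i x, hplmem i x, ?_⟩
      simp [Matrix.mulVecLin]
    rw [hplS _ _ hmem, sub_self]
    simp
  have hQB : ∀ i, Qm i * m.2.1 i * Pm (i + 1) = 0 := by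
    intro i
    apply matext
    intro x
    rw [Matrix.mul_assoc, ← Matrix.mulVec_mulVec, ← Matrix.mulVec_mulVec, hPmul, hQmul]
    have hmem : (m.2.1 i).mulVec (pl (i + 1) x) ∈ S i := by
      refine hSB i ⟨pl (i + 1) x, hplmem (i + 1) x, ?_⟩
      simp [Matrix.mulVecLin]
    rw [hplS _ _ hmem, sub_self]
    simp
  have hPΓ : ∀ j, Pm j * m.2.2.1 j = m.2.2.1 j := by
    intro j
    apply matext
    intro x
    rw [← Matrix.mulVec_mulVec, hPmul]
    refine hplS _ _ (hSΓ j ⟨x, ?_⟩)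
    simp [Matrix.mulVecLin]
  have hQΓ : ∀ j, Qm j * m.2.2.1 j = 0 := by
    intro j
    rw [hQ1, Matrix.sub_mul, Matrix.one_mul, hPΓ, sub_self]
  -- units
  have unit_aux : ∀ (j : ℕ) (s : ℂ), s ≠ 0 → (Pm j + s⁻¹ • Qm j) * (Pm j + s • Qm j) = 1 := by
    intro j s hs
    refine unitPQ (Pm j) (Qm j) (hPP j) (hPQ j) (hQP j) (hQQ j) ?_ s hs
    rw [hQ1, add_sub_cancel]
  let gs : ∀ s : ℂ, s ≠ 0 → Gv v := fun s hs j =>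
    ⟨Pm j + s⁻¹ • Qm j, Pm j + s • Qm j, unit_aux j s hs, by
      have h2 := unit_aux j s⁻¹ (inv_ne_zero hs)
      rwa [inv_inv] at h2⟩
  have gs_val : ∀ (s : ℂ) (hs : s ≠ 0) (j : ℕ), ((gs s hs) j).val = Pm j + s⁻¹ • Qm j :=
    fun _ _ _ => rfl
  have gs_inv : ∀ (s : ℂ) (hs : s ≠ 0) (j : ℕ), (((gs s hs) j)⁻¹).val = Pm j + s • Qm j :=
    fun _ _ _ => rfl
  -- determinant computation
  have detPQ : ∀ (j : ℕ) (a : ℂ), (Pm j + a • Qm j).det = a ^ Module.finrank ℂ (Cc j) := by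
    intro j a
    rw [hQ1]
    exact det_proj_smul (S j) (Cc j) (hC j) a (Pm j) rfl
  -- j0 is at most n
  have hj0n : j0 ≤ n := by
    by_contra hgt
    push_neg at hgt
    have hv0' : v j0 = 0 := hvn j0 hgt
    apply hj0
    rw [Submodule.eq_top_iff']
    intro x
    haveI : IsEmpty (Fin (v j0)) := by rw [hv0']; infer_instance
    have hx0 : x = 0 := funext fun i => (IsEmpty.false i).elim
    rw [hx0]
    exact (S j0).zero_mem
  have hCne : Cc j0 ≠ ⊥ := by
    intro hbot
    apply hj0
    have h4 := (hC j0).sup_eq_top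
    rwa [hbot, sup_bot_eq] at h4
  have hdpos : 0 < Module.finrank ℂ (Cc j0) := by
    rw [Module.finrank_pos_iff]
    exact Submodule.nontrivial_iff_ne_bot.mpr hCne
  set c := ∑ j ∈ Finset.range (n + 1), Module.finrank ℂ (Cc j) with hcdef
  have hcpos : 0 < c := by
    rw [hcdef]
    exact lt_of_lt_of_le hdpos <|
      Finset.single_le_sum (f := fun j => Module.finrank ℂ (Cc j)) (fun j _ => Nat.zero_le _)
        (Finset.mem_range.mpr (Nat.lt_succ_of_le hj0n))
  have hdet : ∀ (s : ℂ) (hs : s ≠ 0),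
      (∏ i ∈ Finset.range (n + 1), ((gs s hs i).val).det) = s⁻¹ ^ c := by
    intro s hs
    rw [hcdef, ← Finset.prod_pow_eq_pow_sum]
    exact Finset.prod_congr rfl fun j _ => by rw [gs_val s hs j, detPQ]
  -- component matrices of the twisted point are affine in s
  have hA' : ∀ (s : ℂ) (hs : s ≠ 0) (i : ℕ),
      (Pm (i + 1) + s⁻¹ • Qm (i + 1)) * m.1 i * (Pm i + s • Qm i)
        = (Pm (i + 1) * m.1 i * Pm i + Qm (i + 1) * m.1 i * Qm i)
          + s • (Pm (i + 1) * m.1 i * Qm i) :=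
    fun s hs i => twistA _ _ _ _ _ s hs (hQA i)
  have hB' : ∀ (s : ℂ) (hs : s ≠ 0) (i : ℕ),
      (Pm i + s⁻¹ • Qm i) * m.2.1 i * (Pm (i + 1) + s • Qm (i + 1))
        = (Pm i * m.2.1 i * Pm (i + 1) + Qm i * m.2.1 i * Qm (i + 1))
          + s • (Pm i * m.2.1 i * Qm (i + 1)) :=
    fun s hs i => twistA _ _ _ _ _ s hs (hQB i)
  have hΓ' : ∀ (s : ℂ) (hs : s ≠ 0) (j : ℕ),
      (Pm j + s⁻¹ • Qm j) * m.2.2.1 j = m.2.2.1 j :=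
    fun s hs j => twistGamma _ _ _ s (hQΓ j) (hPΓ j)
  -- coordinate polynomials
  let cpol : CoordIdx v w → Polynomial ℂ := fun idx =>
    match idx with
    | Sum.inl ⟨i, rc⟩ =>
        Polynomial.C ((Pm (i + 1) * m.1 i * Pm i + Qm (i + 1) * m.1 i * Qm i) rc.1 rc.2)
          + Polynomial.C ((Pm (i + 1) * m.1 i * Qm i) rc.1 rc.2) * Polynomial.X
    | Sum.inr (Sum.inl ⟨i, rc⟩) =>
        Polynomial.C ((Pm i * m.2.1 i * Pm (i + 1) + Qm i * m.2.1 i * Qm (i + 1)) rc.1 rc.2)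
          + Polynomial.C ((Pm i * m.2.1 i * Qm (i + 1)) rc.1 rc.2) * Polynomial.X
    | Sum.inr (Sum.inr (Sum.inl ⟨j, rc⟩)) => Polynomial.C (m.2.2.1 j rc.1 rc.2)
    | Sum.inr (Sum.inr (Sum.inr ⟨j, rc⟩)) =>
        Polynomial.C ((m.2.2.2 j * Pm j) rc.1 rc.2)
          + Polynomial.C ((m.2.2.2 j * Qm j) rc.1 rc.2) * Polynomial.X
  have hcpol1 : ∀ (i : ℕ) (rc : Fin (v (i + 1)) × Fin (v i)), cpol (Sum.inl ⟨i, rc⟩)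
      = Polynomial.C ((Pm (i + 1) * m.1 i * Pm i + Qm (i + 1) * m.1 i * Qm i) rc.1 rc.2)
          + Polynomial.C ((Pm (i + 1) * m.1 i * Qm i) rc.1 rc.2) * Polynomial.X :=
    fun _ _ => rfl
  have hcpol2 : ∀ (i : ℕ) (rc : Fin (v i) × Fin (v (i + 1))), cpol (Sum.inr (Sum.inl ⟨i, rc⟩))
      = Polynomial.C ((Pm i * m.2.1 i * Pm (i + 1) + Qm i * m.2.1 i * Qm (i + 1)) rc.1 rc.2)
          + Polynomial.C ((Pm i * m.2.1 i * Qm (i + 1)) rc.1 rc.2) * Polynomial.X :=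
    fun _ _ => rfl
  have hcpol3 : ∀ (j : ℕ) (rc : Fin (v j) × Fin (w j)),
      cpol (Sum.inr (Sum.inr (Sum.inl ⟨j, rc⟩))) = Polynomial.C (m.2.2.1 j rc.1 rc.2) :=
    fun _ _ => rfl
  have hcpol4 : ∀ (j : ℕ) (rc : Fin (w j) × Fin (v j)), cpol (Sum.inr (Sum.inr (Sum.inr ⟨j, rc⟩)))
      = Polynomial.C ((m.2.2.2 j * Pm j) rc.1 rc.2)
          + Polynomial.C ((m.2.2.2 j * Qm j) rc.1 rc.2) * Polynomial.X :=
    fun _ _ => rfl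
  have hcoords : ∀ (s : ℂ) (hs : s ≠ 0) (idx : CoordIdx v w),
      coords (actGv (gs s hs) m) idx = (cpol idx).eval s := by
    intro s hs idx
    rcases idx with ⟨i, rc⟩ | (⟨i, rc⟩ | (⟨j, rc⟩ | ⟨j, rc⟩))
    · rw [coords_act1, hcpol1, gs_val s hs, gs_inv s hs, hA' s hs i, Polynomial.eval_add,
        Polynomial.eval_mul, Polynomial.eval_C, Polynomial.eval_C, Polynomial.eval_X,
        Matrix.add_apply, Matrix.smul_apply, smul_eq_mul, mul_comm s]
    · rw [coords_act2, hcpol2, gs_val s hs, gs_inv s hs, hB' s hs i, Polynomial.eval_add,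
        Polynomial.eval_mul, Polynomial.eval_C, Polynomial.eval_C, Polynomial.eval_X,
        Matrix.add_apply, Matrix.smul_apply, smul_eq_mul, mul_comm s]
    · rw [coords_act3, hcpol3, gs_val s hs, hΓ' s hs j, Polynomial.eval_C]
    · rw [coords_act4, hcpol4, gs_inv s hs, twistDelta (m.2.2.2 j) (Pm j) (Qm j) s,
        Polynomial.eval_add, Polynomial.eval_mul, Polynomial.eval_C, Polynomial.eval_C,
        Polynomial.eval_X, Matrix.add_apply, Matrix.smul_apply, smul_eq_mul, mul_comm s]
  -- the restricted polynomial in one variable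
  set q : Polynomial ℂ := MvPolynomial.eval₂ Polynomial.C cpol P with hqdef
  set Fm := MvPolynomial.eval (coords m) P with hFmdef
  have hq : ∀ (s : ℂ) (hs : s ≠ 0), q.eval s = (s⁻¹ ^ c) ^ k * Fm := by
    intro s hs
    have h2 : (Polynomial.evalRingHom s).comp Polynomial.C = RingHom.id ℂ :=
      RingHom.ext fun a => Polynomial.eval_C
    have h1 := MvPolynomial.eval₂_comp_left (Polynomial.evalRingHom s) Polynomial.C cpol P
    rw [h2, MvPolynomial.eval₂_id] at h1
    have h1' : q.eval s = MvPolynomial.eval (⇑(Polynomial.evalRingHom s) ∘ cpol) P := h1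
    rw [h1']
    have h3 : (⇑(Polynomial.evalRingHom s) ∘ cpol) = coords (actGv (gs s hs) m) :=
      funext fun idx => ((hcoords s hs idx).symm : (cpol idx).eval s = _)
    rw [h3, hPeq (gs s hs) m hm, hdet s hs]
  have hr : ∀ s : ℂ, s ≠ 0 → (Polynomial.X ^ (c * k) * q - Polynomial.C Fm).eval s = 0 := by
    intro s hs
    have hpow : (s : ℂ) ^ (c * k) * (s⁻¹ ^ c) ^ k = 1 := by
      rw [← pow_mul, ← mul_pow, mul_inv_cancel₀ hs, one_pow]
    simp only [Polynomial.eval_sub, Polynomial.eval_mul, Polynomial.eval_pow, Polynomial.eval_X,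
      Polynomial.eval_C, hq s hs]
    rw [← mul_assoc, hpow, one_mul, sub_self]
  have hr0 : Polynomial.X ^ (c * k) * q - Polynomial.C Fm = 0 := by
    apply Polynomial.eq_zero_of_infinite_isRoot
    refine Set.Infinite.mono ?_ ((Set.finite_singleton (0 : ℂ)).infinite_compl)
    intro x hx
    have hx0 : x ≠ 0 := by simpa using hx
    exact hr x hx0
  have hz := congrArg (Polynomial.eval 0) hr0
  have hck : c * k ≠ 0 := Nat.mul_ne_zero hcpos.ne' (Nat.one_le_iff_ne_zero.mp hk)
  simp only [Polynomial.eval_sub, Polynomial.eval_mul, Polynomial.eval_pow, Polynomial.eval_X,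
    Polynomial.eval_C, Polynomial.eval_zero, zero_pow hck, zero_mul, zero_sub,
    neg_eq_zero] at hz
  exact hPne hz

end Stmt5

/-- a point of `Λ(v,w)` is `𝟏`-semistable iff it satisfies the subspace
condition. -/
theorem stmt5 (n : ℕ) (hn : 1 ≤ n) (v w : ℕ → ℕ)
    (hv0 : v 0 = 0) (hvn : ∀ i, n < i → v i = 0)
    (hw0 : w 0 = 0) (hwn : ∀ j, n < j → w j = 0)
    (m : Mvw v w) (hm : inLambda m) :
    OneSemistable n m ↔ SubCond m := by
  exact ⟨fun hss => Stmt5.subCond_of_oneSemistable n hvn hm hss,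
    fun h => Stmt5.oneSemistable_of_subCond n h⟩
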